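/- Let d ≥ 1, α ∈ (0,1) and T > 0. Let h : [0,T] × ℝ^d → ℝ be such that for each s ∈ [0,T] the function h(s,·) is bounded and differentiable with ∇h(s,·) bounded and α-Hölder, the map s ↦ h(s,·) is continuous in the norm ‖f‖_{C^{1+α}} := ‖f‖_∞ + ‖∇f‖_∞ + [∇f]_α, and M := sup_{s ∈ [0,T]} ‖h(s,·)‖_{C^{1+α}} < ∞. Define v(t,x) = ∫_t^T (P_{s−t} h(s,·))(x) ds. Then v(t,·) is bounded and differentiable with ∇v(t,·) bounded and α-Hölder for each t, and sup_{t ∈ [0,T]} ‖v(t,·)‖_{C^{1+α}} ≤ c T M for a constant c depending only on d, α, T. -/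

import Mathlib

set_option maxHeartbeats 2000000
set_option synthInstance.maxHeartbeats 1000000

open MeasureTheory Real Filter Topology
/-- The heat kernel `p_t(x) = (2πt)^{-d/2} exp(-‖x‖²/(2t))` on `ℝ^d`. -/
noncomputable def heatKernel (d : ℕ) (t : ℝ) (x : EuclideanSpace ℝ (Fin d)) : ℝ :=
  (2 * Real.pi * t) ^ (-(d : ℝ) / 2) * Real.exp (-‖x‖ ^ 2 / (2 * t))

/-- The heat semigroup `P_t h (x) = ∫ p_t(x-y) h(y) dy` for `t > 0`, with `P_0 h = h`. -/
noncomputable def heatSemigroup (d : ℕ) (t : ℝ) (h : EuclideanSpace ℝ (Fin d) → ℝ)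
    (x : EuclideanSpace ℝ (Fin d)) : ℝ :=
  if t = 0 then h x else ∫ y, heatKernel d t (x - y) * h y

/-- The supremum norm `‖g‖_∞ = ⨆ x, ‖g x‖` of a function. -/
noncomputable def supNorm {E F : Type*} [NormedAddCommGroup F] (g : E → F) : ℝ :=
  ⨆ x, ‖g x‖

/-- The `γ`-Hölder seminorm `[g]_γ = sup_{x ≠ y} ‖g x - g y‖ / ‖x - y‖^γ`. -/
noncomputable def holderSem {E F : Type*} [NormedAddCommGroup E] [NormedAddCommGroup F]
    (γ : ℝ) (g : E → F) : ℝ :=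
  sSup {r : ℝ | ∃ x y : E, x ≠ y ∧ r = ‖g x - g y‖ / ‖x - y‖ ^ γ}

/-- The `C^{1+α}` norm `‖f‖_{C^{1+α}} = ‖f‖_∞ + ‖∇f‖_∞ + [∇f]_α`. -/
noncomputable def c1aNorm (d : ℕ) (α : ℝ) (f : EuclideanSpace ℝ (Fin d) → ℝ) : ℝ :=
  supNorm f + supNorm (gradient f) + holderSem α (gradient f)

section Helpers



variable {d : ℕ}

lemma hk_nonneg {u : ℝ} (hu : 0 < u) (x : EuclideanSpace ℝ (Fin d)) :
    0 ≤ heatKernel d u x := by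
  have : (0:ℝ) < 2 * Real.pi * u := by positivity
  unfold heatKernel
  positivity

lemma hk_cont (u : ℝ) : Continuous (heatKernel d u) := by
  unfold heatKernel
  exact continuous_const.mul (((continuous_norm.pow 2).neg.div_const _).rexp)

lemma integrable_gauss {b : ℝ} (hb : 0 < b) :
    Integrable (fun y : EuclideanSpace ℝ (Fin d) => Real.exp (-b * ‖y‖ ^ 2)) := by
  have h := (GaussianFourier.integrable_cexp_neg_mul_sq_norm_add (V := EuclideanSpace ℝ (Fin d))
    (b := (b : ℂ)) (by simpa using hb) 0 0).norm
  refine h.congr ?_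
  filter_upwards with y
  rw [Complex.norm_exp]
  norm_num
  left
  norm_cast

lemma hk_integrable {u : ℝ} (hu : 0 < u) :
    Integrable (heatKernel d u) := by
  unfold heatKernel
  have : ∀ x : EuclideanSpace ℝ (Fin d), -‖x‖^2 / (2*u) = -(1/(2*u)) * ‖x‖^2 := by
    intro x; ring
  simp_rw [this]
  exact (integrable_gauss (by positivity)).const_mul _

lemma hk_integral {u : ℝ} (hu : 0 < u) :
    ∫ x : EuclideanSpace ℝ (Fin d), heatKernel d u x = 1 := by
  unfold heatKernel
  have h1 : ∀ x : EuclideanSpace ℝ (Fin d), -‖x‖^2 / (2*u) = -(1/(2*u)) * ‖x‖^2 := by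
    intro x; ring
  simp_rw [h1, integral_const_mul]
  rw [GaussianFourier.integral_rexp_neg_mul_sq_norm (by positivity)]
  rw [finrank_euclideanSpace_fin]
  have h2 : Real.pi / (1/(2*u)) = 2 * Real.pi * u := by
    field_simp
  rw [h2, ← Real.rpow_add (by positivity)]
  rw [neg_div, neg_add_cancel, Real.rpow_zero]

lemma hk_le {a b u : ℝ} (ha : 0 < a) (hau : a ≤ u) (hub : u ≤ b)
    (y : EuclideanSpace ℝ (Fin d)) :
    heatKernel d u y ≤ (2 * Real.pi * a) ^ (-(d:ℝ)/2) * Real.exp (-‖y‖^2 / (2*b)) := by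
  have hu : 0 < u := lt_of_lt_of_le ha hau
  unfold heatKernel
  have h1 : (2 * Real.pi * u) ^ (-(d:ℝ)/2) ≤ (2 * Real.pi * a) ^ (-(d:ℝ)/2) := by
    apply Real.rpow_le_rpow_of_nonpos (by positivity)
    · nlinarith [Real.pi_pos]
    · have : (0:ℝ) ≤ (d:ℝ) := Nat.cast_nonneg d
      linarith
  have h2 : Real.exp (-‖y‖^2 / (2*u)) ≤ Real.exp (-‖y‖^2 / (2*b)) := by
    apply Real.exp_le_exp.mpr
    rw [neg_div, neg_div, neg_le_neg_iff]
    apply div_le_div_of_nonneg_left (by positivity) (by positivity) (by linarith)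
  have e2 : (0:ℝ) < Real.exp (-‖y‖^2 / (2*u)) := Real.exp_pos _
  calc (2 * Real.pi * u) ^ (-(d:ℝ)/2) * Real.exp (-‖y‖^2 / (2*u))
      ≤ (2 * Real.pi * a) ^ (-(d:ℝ)/2) * Real.exp (-‖y‖^2 / (2*u)) :=
        mul_le_mul_of_nonneg_right h1 e2.le
    _ ≤ (2 * Real.pi * a) ^ (-(d:ℝ)/2) * Real.exp (-‖y‖^2 / (2*b)) := by
        apply mul_le_mul_of_nonneg_left h2 (by positivity)

lemma hk_contAt_u {u₀ : ℝ} (hu₀ : 0 < u₀) (y : EuclideanSpace ℝ (Fin d)) :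
    ContinuousAt (fun u => heatKernel d u y) u₀ := by
  unfold heatKernel
  apply ContinuousAt.mul
  · apply Real.continuousAt_rpow_const _ _ (Or.inl (by positivity))
    |>.comp (by fun_prop)
  · exact (Real.continuous_exp.continuousAt).comp
      (ContinuousAt.div continuousAt_const (by fun_prop) (by positivity))

/-- Hölder continuity implies continuity. -/
lemma cont_of_holder {E F : Type*} [NormedAddCommGroup E] [NormedAddCommGroup F]
    {α C : ℝ} (hα : 0 < α) (f : E → F)
    (hf : ∀ x y, ‖f x - f y‖ ≤ C * ‖x - y‖ ^ α) : Continuous f := by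
  rw [continuous_iff_continuousAt]
  intro a
  rw [ContinuousAt, ← tendsto_sub_nhds_zero_iff]
  apply squeeze_zero_norm (fun b => hf b a)
  have h1 : Filter.Tendsto (fun b : E => ‖b - a‖) (nhds a) (nhds 0) := by
    have : Continuous (fun b : E => ‖b - a‖) := by fun_prop
    simpa using this.tendsto a
  have h2 : Filter.Tendsto (fun r : ℝ => C * r ^ α) (nhds 0) (nhds 0) := by
    have h3 : Filter.Tendsto (fun r : ℝ => r ^ α) (nhds 0) (nhds 0) := by
      have := (Real.continuousAt_rpow_const 0 α (Or.inr hα.le)).tendsto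
      simpa [Real.zero_rpow hα.ne'] using this
    simpa using h3.const_mul C
  exact h2.comp h1




lemma supNorm_nonneg {E F : Type*} [NormedAddCommGroup F] (g : E → F) : 0 ≤ supNorm g :=
  Real.iSup_nonneg (fun _ => norm_nonneg _)

lemma holderSem_nonneg {E F : Type*} [NormedAddCommGroup E] [NormedAddCommGroup F]
    (γ : ℝ) (g : E → F) : 0 ≤ holderSem γ g := by
  apply Real.sSup_nonneg
  rintro r ⟨x, y, -, rfl⟩
  positivity

lemma c1aNorm_nonneg (d : ℕ) (α : ℝ) (f : EuclideanSpace ℝ (Fin d) → ℝ) :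
    0 ≤ c1aNorm d α f := by
  have := supNorm_nonneg f
  have := supNorm_nonneg (gradient f)
  have := holderSem_nonneg α (gradient f)
  unfold c1aNorm; linarith

lemma le_supNorm {E F : Type*} [NormedAddCommGroup F] {g : E → F} {C : ℝ}
    (hb : ∀ x, ‖g x‖ ≤ C) (x : E) : ‖g x‖ ≤ supNorm g :=
  le_ciSup ⟨C, by rintro r ⟨x, rfl⟩; exact hb x⟩ x

lemma supNorm_le {E F : Type*} [Nonempty E] [NormedAddCommGroup F] {g : E → F} {C : ℝ}
    (hb : ∀ x, ‖g x‖ ≤ C) : supNorm g ≤ C := ciSup_le hb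

lemma le_holderSem {E F : Type*} [NormedAddCommGroup E] [NormedAddCommGroup F]
    {γ : ℝ} (hγ : 0 < γ) {g : E → F} {C : ℝ}
    (hb : ∀ x y, ‖g x - g y‖ ≤ C * ‖x - y‖ ^ γ) (x y : E) :
    ‖g x - g y‖ ≤ holderSem γ g * ‖x - y‖ ^ γ := by
  rcases eq_or_ne x y with rfl | hxy
  · simp [Real.zero_rpow hγ.ne']
  · have hpos : (0:ℝ) < ‖x - y‖ ^ γ := by
      apply Real.rpow_pos_of_pos
      rw [norm_pos_iff, sub_ne_zero]; exact hxy
    rw [← div_le_iff₀ hpos]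
    apply le_csSup
    · refine ⟨C, ?_⟩
      rintro r ⟨a, b, hab, rfl⟩
      have hpos' : (0:ℝ) < ‖a - b‖ ^ γ := by
        apply Real.rpow_pos_of_pos
        rw [norm_pos_iff, sub_ne_zero]; exact hab
      rw [div_le_iff₀ hpos']
      exact hb a b
    · exact ⟨x, y, hxy, rfl⟩

lemma holderSem_le {E F : Type*} [NormedAddCommGroup E] [NormedAddCommGroup F]
    {γ : ℝ} {g : E → F} {C : ℝ} (hne : ∃ x y : E, x ≠ y)
    (hb : ∀ x y, ‖g x - g y‖ ≤ C * ‖x - y‖ ^ γ) : holderSem γ g ≤ C := by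
  apply csSup_le
  · obtain ⟨x, y, hxy⟩ := hne
    exact ⟨_, x, y, hxy, rfl⟩
  · rintro r ⟨a, b, hab, rfl⟩
    have hpos' : (0:ℝ) < ‖a - b‖ ^ γ := by
      apply Real.rpow_pos_of_pos
      rw [norm_pos_iff, sub_ne_zero]; exact hab
    rw [div_le_iff₀ hpos']
    exact hb a b

section Grad
variable {E : Type*} [NormedAddCommGroup E] [InnerProductSpace ℝ E] [CompleteSpace E]

lemma norm_gradient_sub (f g : E → ℝ) (x y : E) :
    ‖gradient f x - gradient g y‖ = ‖fderiv ℝ f x - fderiv ℝ g y‖ := by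
  rw [gradient, gradient, ← map_sub, LinearIsometryEquiv.norm_map]

lemma norm_gradient (f : E → ℝ) (x : E) : ‖gradient f x‖ = ‖fderiv ℝ f x‖ := by
  rw [gradient, LinearIsometryEquiv.norm_map]

end Grad

section Conv
variable {d : ℕ} {F : Type*} [NormedAddCommGroup F] [NormedSpace ℝ F]

lemma conv_integrable {u : ℝ} (hu : 0 < u) {g : EuclideanSpace ℝ (Fin d) → F}
    (hgc : Continuous g) {M : ℝ} (hb : ∀ x, ‖g x‖ ≤ M) (x : EuclideanSpace ℝ (Fin d)) :
    Integrable (fun y => heatKernel d u y • g (x - y)) := by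
  apply Integrable.mono' ((hk_integrable hu).const_mul M)
  · exact ((hk_cont u).smul (hgc.comp (continuous_const.sub continuous_id))).aestronglyMeasurable
  · filter_upwards with y
    rw [norm_smul, Real.norm_eq_abs, abs_of_nonneg (hk_nonneg hu y), mul_comm M]
    exact mul_le_mul_of_nonneg_left (hb _) (hk_nonneg hu y)

lemma conv_norm_le {u : ℝ} (hu : 0 < u) {g : EuclideanSpace ℝ (Fin d) → F}
    (hgc : Continuous g) {M : ℝ} (hb : ∀ x, ‖g x‖ ≤ M) (x : EuclideanSpace ℝ (Fin d)) :
    ‖∫ y, heatKernel d u y • g (x - y)‖ ≤ M := by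
  have h1 : ‖∫ y, heatKernel d u y • g (x - y)‖ ≤ ∫ y, M * heatKernel d u y := by
    apply norm_integral_le_of_norm_le ((hk_integrable hu).const_mul M)
    filter_upwards with y
    rw [norm_smul, Real.norm_eq_abs, abs_of_nonneg (hk_nonneg hu y), mul_comm M]
    exact mul_le_mul_of_nonneg_left (hb _) (hk_nonneg hu y)
  rwa [integral_const_mul, hk_integral hu, mul_one] at h1

lemma conv_diff_le {u : ℝ} (hu : 0 < u) {g : EuclideanSpace ℝ (Fin d) → F}
    (hgc : Continuous g) {M C γ : ℝ} (hb : ∀ x, ‖g x‖ ≤ M)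
    (hB : ∀ a b, ‖g a - g b‖ ≤ C * ‖a - b‖ ^ γ) (x z : EuclideanSpace ℝ (Fin d)) :
    ‖(∫ y, heatKernel d u y • g (x - y)) - ∫ y, heatKernel d u y • g (z - y)‖
      ≤ C * ‖x - z‖ ^ γ := by
  rw [← integral_sub (conv_integrable hu hgc hb x) (conv_integrable hu hgc hb z)]
  have h1 : ‖∫ y, (heatKernel d u y • g (x - y) - heatKernel d u y • g (z - y))‖
      ≤ ∫ y, (C * ‖x - z‖ ^ γ) * heatKernel d u y := by
    apply norm_integral_le_of_norm_le ((hk_integrable hu).const_mul _)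
    filter_upwards with y
    rw [← smul_sub, norm_smul, Real.norm_eq_abs, abs_of_nonneg (hk_nonneg hu y),
      mul_comm (C * ‖x - z‖ ^ γ)]
    apply mul_le_mul_of_nonneg_left _ (hk_nonneg hu y)
    calc ‖g (x - y) - g (z - y)‖ ≤ C * ‖(x - y) - (z - y)‖ ^ γ := hB _ _
      _ = C * ‖x - z‖ ^ γ := by rw [sub_sub_sub_cancel_right]
  rwa [integral_const_mul, hk_integral hu, mul_one] at h1

lemma conv_hasFDerivAt {u : ℝ} (hu : 0 < u) {g : EuclideanSpace ℝ (Fin d) → ℝ}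
    (hg : Differentiable ℝ g) {M : ℝ} (hb : ∀ x, |g x| ≤ M)
    (hb2 : ∀ x, ‖fderiv ℝ g x‖ ≤ M) (hfc : Continuous (fderiv ℝ g))
    (x₀ : EuclideanSpace ℝ (Fin d)) :
    HasFDerivAt (fun x => ∫ y, heatKernel d u y * g (x - y))
      (∫ y, heatKernel d u y • fderiv ℝ g (x₀ - y)) x₀ := by
  apply hasFDerivAt_integral_of_dominated_of_fderiv_le (Metric.ball_mem_nhds x₀ one_pos)
    (bound := fun y => M * heatKernel d u y)
    (F' := fun x y => heatKernel d u y • fderiv ℝ g (x - y))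
  · filter_upwards with x
    exact ((hk_cont u).mul
      ((hg.continuous).comp (continuous_const.sub continuous_id))).aestronglyMeasurable
  · have := conv_integrable (F := ℝ) hu hg.continuous (M := M) (fun x => by simpa using hb x) x₀
    simpa [smul_eq_mul] using this
  · exact ((hk_cont u).smul (hfc.comp (continuous_const.sub continuous_id))).aestronglyMeasurable
  · filter_upwards with y
    intro x _
    rw [norm_smul (heatKernel d u y) (fderiv ℝ g (x - y)), Real.norm_eq_abs,
      abs_of_nonneg (hk_nonneg hu y), mul_comm M]
    exact mul_le_mul_of_nonneg_left (hb2 _) (hk_nonneg hu y)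
  · exact (hk_integrable hu).const_mul M
  · filter_upwards with y
    intro x _
    have h1 : HasFDerivAt (fun x : EuclideanSpace ℝ (Fin d) => x - y)
        (ContinuousLinearMap.id ℝ _) x := (hasFDerivAt_id x).sub_const y
    have h2 : HasFDerivAt (fun x : EuclideanSpace ℝ (Fin d) => g (x - y))
        (fderiv ℝ g (x - y)) x := by
      exact ((hg (x - y)).hasFDerivAt).comp x h1
    simpa [smul_smul] using h2.const_mul (heatKernel d u y)
end Conv


lemma heatSemigroup_eq {d : ℕ} {u : ℝ} (hu : 0 < u) (g : EuclideanSpace ℝ (Fin d) → ℝ)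
    (x : EuclideanSpace ℝ (Fin d)) :
    heatSemigroup d u g x = ∫ y, heatKernel d u y * g (x - y) := by
  rw [heatSemigroup, if_neg hu.ne']
  rw [← integral_sub_left_eq_self (fun y => heatKernel d u y * g (x - y)) volume x]
  simp
end Helpers

open Set in
/-- There is a constant `c > 0` (depending only on `d`, `α`, `T`) such that
for every map `h : [0,T] → C^{1+α}` (bounded differentiable functions with bounded
`α`-Hölder gradient), continuous in the `C^{1+α}` norm and with
`sup_{s ∈ [0,T]} ‖h(s,·)‖_{C^{1+α}} ≤ M`, the function
`v(t,x) = ∫_t^T (P_{s−t} h(s,·))(x) ds` satisfies `v(t,·) ∈ C^{1+α}` for every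
`t ∈ [0,T]` and `sup_{t ∈ [0,T]} ‖v(t,·)‖_{C^{1+α}} ≤ c T M`. -/
theorem stmt_9 (d : ℕ) (hd : 1 ≤ d) (α : ℝ) (hα : α ∈ Set.Ioo (0 : ℝ) 1)
    (T : ℝ) (hT : 0 < T) :
    ∃ c : ℝ, 0 < c ∧
      ∀ (h : ℝ → EuclideanSpace ℝ (Fin d) → ℝ) (M : ℝ),
        (∀ s ∈ Set.Icc (0 : ℝ) T,
          (∃ C, ∀ x, |h s x| ≤ C) ∧ Differentiable ℝ (h s) ∧
          (∃ C, ∀ x, ‖gradient (h s) x‖ ≤ C) ∧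
          (∃ C, ∀ x y, ‖gradient (h s) x - gradient (h s) y‖ ≤ C * ‖x - y‖ ^ α)) →
        (∀ s₀ ∈ Set.Icc (0 : ℝ) T, Filter.Tendsto
          (fun s => c1aNorm d α (fun x => h s x - h s₀ x))
          (nhdsWithin s₀ (Set.Icc (0 : ℝ) T)) (nhds 0)) →
        (∀ s ∈ Set.Icc (0 : ℝ) T, c1aNorm d α (h s) ≤ M) →
        ∀ v : ℝ → EuclideanSpace ℝ (Fin d) → ℝ,
          (∀ t x, v t x = ∫ s in t..T, heatSemigroup d (s - t) (h s) x) →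
          ∀ t ∈ Set.Icc (0 : ℝ) T,
            (∃ C, ∀ x, |v t x| ≤ C) ∧ Differentiable ℝ (v t) ∧
            (∃ C, ∀ x, ‖gradient (v t) x‖ ≤ C) ∧
            (∃ C, ∀ x y, ‖gradient (v t) x - gradient (v t) y‖ ≤ C * ‖x - y‖ ^ α) ∧
            c1aNorm d α (v t) ≤ c * T * M := by
  obtain ⟨hα0, hα1⟩ := hα
  refine ⟨3, by norm_num, ?_⟩
  intro h M hreg hcont hbnd v hv t ht
  obtain ⟨ht0, htT⟩ := ht
  have hpair : ∃ x y : EuclideanSpace ℝ (Fin d), x ≠ y := by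
    refine ⟨EuclideanSpace.single ⟨0, hd⟩ 1, 0, fun hcon => ?_⟩
    have := congrArg (fun w : EuclideanSpace ℝ (Fin d) => w ⟨0, hd⟩) hcon
    simp [EuclideanSpace.single_apply] at this
  have hM0 : 0 ≤ M := le_trans (c1aNorm_nonneg d α (h 0)) (hbnd 0 ⟨le_refl 0, hT.le⟩)
  have hdiffs : ∀ s ∈ Icc (0:ℝ) T, Differentiable ℝ (h s) := fun s hs => (hreg s hs).2.1
  -- pointwise bounds
  have hb1 : ∀ s ∈ Icc (0:ℝ) T, ∀ x, |h s x| ≤ M := by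
    intro s hs x
    obtain ⟨⟨C, hC⟩, -, -, -⟩ := hreg s hs
    have h1 : ‖h s x‖ ≤ supNorm (h s) := le_supNorm (fun z => by simpa using hC z) x
    have h2 : supNorm (h s) ≤ M := by
      have n1 := supNorm_nonneg (gradient (h s))
      have n2 := holderSem_nonneg α (gradient (h s))
      have n3 := hbnd s hs
      unfold c1aNorm at n3; linarith
    simpa using h1.trans h2
  have hb2 : ∀ s ∈ Icc (0:ℝ) T, ∀ x, ‖fderiv ℝ (h s) x‖ ≤ M := by
    intro s hs x
    obtain ⟨-, -, ⟨C, hC⟩, -⟩ := hreg s hs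
    rw [← norm_gradient]
    refine (le_supNorm hC x).trans ?_
    have n1 := supNorm_nonneg (h s)
    have n2 := holderSem_nonneg α (gradient (h s))
    have n3 := hbnd s hs
    unfold c1aNorm at n3; linarith
  have hb3 : ∀ s ∈ Icc (0:ℝ) T, ∀ x y, ‖fderiv ℝ (h s) x - fderiv ℝ (h s) y‖
      ≤ M * ‖x - y‖ ^ α := by
    intro s hs x y
    obtain ⟨-, -, -, ⟨C, hC⟩⟩ := hreg s hs
    rw [← norm_gradient_sub]
    refine (le_holderSem hα0 hC x y).trans ?_
    apply mul_le_mul_of_nonneg_right _ (Real.rpow_nonneg (norm_nonneg _) _)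
    have n1 := supNorm_nonneg (h s)
    have n2 := supNorm_nonneg (gradient (h s))
    have n3 := hbnd s hs
    unfold c1aNorm at n3; linarith
  have hfc : ∀ s ∈ Icc (0:ℝ) T, Continuous (fderiv ℝ (h s)) :=
    fun s hs => cont_of_holder hα0 _ (hb3 s hs)
  -- time continuity, pointwise
  have hcont1 : ∀ s₀ ∈ Icc (0:ℝ) T, ∀ z, Filter.Tendsto (fun s => h s z)
      (nhdsWithin s₀ (Icc (0:ℝ) T)) (nhds (h s₀ z)) := by
    intro s₀ hs₀ z
    rw [← tendsto_sub_nhds_zero_iff]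
    apply squeeze_zero_norm' ?_ (hcont s₀ hs₀)
    filter_upwards [self_mem_nhdsWithin] with s hs
    obtain ⟨⟨C, hC⟩, -, -, -⟩ := hreg s hs
    obtain ⟨⟨C₀, hC₀⟩, -, -, -⟩ := hreg s₀ hs₀
    have key : ‖h s z - h s₀ z‖ ≤ supNorm (fun x => h s x - h s₀ x) := by
      apply le_supNorm (C := C + C₀) (fun w => ?_) z
      calc ‖h s w - h s₀ w‖ ≤ ‖h s w‖ + ‖h s₀ w‖ := norm_sub_le _ _
        _ ≤ C + C₀ := add_le_add (by simpa using hC w) (by simpa using hC₀ w)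
    refine key.trans ?_
    have n1 := supNorm_nonneg (gradient (fun x => h s x - h s₀ x))
    have n2 := holderSem_nonneg α (gradient (fun x => h s x - h s₀ x))
    unfold c1aNorm; linarith
  have hcont2 : ∀ s₀ ∈ Icc (0:ℝ) T, ∀ z, Filter.Tendsto (fun s => fderiv ℝ (h s) z)
      (nhdsWithin s₀ (Icc (0:ℝ) T)) (nhds (fderiv ℝ (h s₀) z)) := by
    intro s₀ hs₀ z
    rw [← tendsto_sub_nhds_zero_iff]
    apply squeeze_zero_norm' ?_ (hcont s₀ hs₀)
    filter_upwards [self_mem_nhdsWithin] with s hs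
    have e1 : ∀ w, fderiv ℝ (fun x => h s x - h s₀ x) w
        = fderiv ℝ (h s) w - fderiv ℝ (h s₀) w :=
      fun w => fderiv_sub (hdiffs s hs w) (hdiffs s₀ hs₀ w)
    have key : ‖fderiv ℝ (h s) z - fderiv ℝ (h s₀) z‖
        ≤ supNorm (gradient (fun x => h s x - h s₀ x)) := by
      rw [← e1 z, ← norm_gradient]
      apply le_supNorm (C := M + M) (fun w => ?_) z
      rw [norm_gradient, e1 w]
      exact (norm_sub_le _ _).trans (add_le_add (hb2 s hs w) (hb2 s₀ hs₀ w))
    refine key.trans ?_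
    have n1 := supNorm_nonneg (fun x => h s x - h s₀ x)
    have n2 := holderSem_nonneg α (gradient (fun x => h s x - h s₀ x))
    unfold c1aNorm; linarith
  -- subset fact
  have hsub : Ioc t T ⊆ Icc (0:ℝ) T := fun s hs => ⟨ht0.trans hs.1.le, hs.2⟩
  -- v as set integral
  have hvK : ∀ x, v t x = ∫ s in Ioc t T, ∫ y, heatKernel d (s - t) y * h s (x - y) := by
    intro x
    rw [hv t x, intervalIntegral.integral_of_le htT]
    apply setIntegral_congr_fun measurableSet_Ioc
    intro s hs
    exact heatSemigroup_eq (sub_pos.mpr hs.1) (h s) x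
  -- pointwise-in-s facts
  have keyK : ∀ s ∈ Ioc t T, ∀ x,
      |∫ y, heatKernel d (s - t) y * h s (x - y)| ≤ M := by
    intro s hs x
    have := conv_norm_le (F := ℝ) (sub_pos.mpr hs.1) (hdiffs s (hsub hs)).continuous
      (M := M) (fun z => by simpa using hb1 s (hsub hs) z) x
    simpa [smul_eq_mul] using this
  have keyD : ∀ s ∈ Ioc t T, ∀ x,
      HasFDerivAt (fun x => ∫ y, heatKernel d (s - t) y * h s (x - y))
        (∫ y, heatKernel d (s - t) y • fderiv ℝ (h s) (x - y)) x :=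
    fun s hs x => conv_hasFDerivAt (sub_pos.mpr hs.1) (hdiffs s (hsub hs))
      (hb1 s (hsub hs)) (hb2 s (hsub hs)) (hfc s (hsub hs)) x
  have keyL : ∀ s ∈ Ioc t T, ∀ x,
      ‖∫ y, heatKernel d (s - t) y • fderiv ℝ (h s) (x - y)‖ ≤ M :=
    fun s hs x => conv_norm_le (sub_pos.mpr hs.1) (hfc s (hsub hs)) (hb2 s (hsub hs)) x
  have keyLd : ∀ s ∈ Ioc t T, ∀ x z,
      ‖(∫ y, heatKernel d (s - t) y • fderiv ℝ (h s) (x - y))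
        - ∫ y, heatKernel d (s - t) y • fderiv ℝ (h s) (z - y)‖ ≤ M * ‖x - z‖ ^ α :=
    fun s hs x z => conv_diff_le (sub_pos.mpr hs.1) (hfc s (hsub hs)) (hb2 s (hsub hs))
      (hb3 s (hsub hs)) x z
  -- continuity in s
  have hKcont : ∀ x, ContinuousOn
      (fun s => ∫ y, heatKernel d (s - t) y * h s (x - y)) (Ioc t T) := by
    intro x s₀ hs₀
    have hu₀ : 0 < s₀ - t := sub_pos.mpr hs₀.1
    set a : ℝ := (s₀ - t) / 2 with ha_def
    have ha : 0 < a := by positivity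
    set b : ℝ := T - t with hb_def
    have hb : 0 < b := by
      have := hs₀.1.trans_le hs₀.2; simp only [hb_def]; linarith
    apply tendsto_integral_filter_of_dominated_convergence
      (bound := fun y => M * ((2 * Real.pi * a) ^ (-(d:ℝ)/2) * Real.exp (-‖y‖^2 / (2*b))))
    · filter_upwards [self_mem_nhdsWithin] with s hs
      exact ((hk_cont _).mul ((hdiffs s (hsub hs)).continuous.comp
        (continuous_const.sub continuous_id))).aestronglyMeasurable
    · filter_upwards [Filter.inter_mem (mem_nhdsWithin_of_mem_nhds (Metric.ball_mem_nhds s₀ ha))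
        self_mem_nhdsWithin] with s hs
      obtain ⟨hball, hIoc⟩ := hs
      have hdist : |s - s₀| < a := by
        have := Metric.mem_ball.mp hball
        rwa [Real.dist_eq] at this
      have h1 : a ≤ s - t := by
        rw [abs_sub_lt_iff] at hdist
        simp only [ha_def] at *
        linarith [hdist.2]
      have h2 : s - t ≤ b := by simp only [hb_def]; linarith [hIoc.2]
      filter_upwards with y
      rw [norm_mul, Real.norm_eq_abs, Real.norm_eq_abs,
        abs_of_nonneg (hk_nonneg (ha.trans_le h1) y), mul_comm M]
      apply mul_le_mul (hk_le ha h1 h2 y) (by simpa using hb1 s (hsub hIoc) (x - y))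
        (abs_nonneg _) (by positivity)
    · have : ∀ y : EuclideanSpace ℝ (Fin d), -‖y‖^2 / (2*b) = -(1/(2*b)) * ‖y‖^2 :=
        fun y => by ring
      simp_rw [this]
      exact (((integrable_gauss (by positivity)).const_mul _).const_mul M)
    · filter_upwards with y
      have t1 : Filter.Tendsto (fun s => heatKernel d (s - t) y)
          (nhdsWithin s₀ (Ioc t T)) (nhds (heatKernel d (s₀ - t) y)) := by
        have hg : ContinuousAt (fun s : ℝ => s - t) s₀ := by fun_prop
        have hc := ContinuousAt.comp (f := fun s : ℝ => s - t) (x := s₀)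
          (hk_contAt_u hu₀ y) hg
        exact hc.tendsto.mono_left nhdsWithin_le_nhds
      have t2 : Filter.Tendsto (fun s => h s (x - y))
          (nhdsWithin s₀ (Ioc t T)) (nhds (h s₀ (x - y))) :=
        (hcont1 s₀ (hsub hs₀) (x - y)).mono_left (nhdsWithin_mono s₀ hsub)
      exact t1.mul t2
  have hLcont : ∀ x, ContinuousOn
      (fun s => ∫ y, heatKernel d (s - t) y • fderiv ℝ (h s) (x - y)) (Ioc t T) := by
    intro x s₀ hs₀
    have hu₀ : 0 < s₀ - t := sub_pos.mpr hs₀.1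
    set a : ℝ := (s₀ - t) / 2 with ha_def
    have ha : 0 < a := by positivity
    set b : ℝ := T - t with hb_def
    have hb : 0 < b := by
      have := hs₀.1.trans_le hs₀.2; simp only [hb_def]; linarith
    apply tendsto_integral_filter_of_dominated_convergence
      (bound := fun y => M * ((2 * Real.pi * a) ^ (-(d:ℝ)/2) * Real.exp (-‖y‖^2 / (2*b))))
    · filter_upwards [self_mem_nhdsWithin] with s hs
      exact ((hk_cont _).smul ((hfc s (hsub hs)).comp
        (continuous_const.sub continuous_id))).aestronglyMeasurable
    · filter_upwards [Filter.inter_mem (mem_nhdsWithin_of_mem_nhds (Metric.ball_mem_nhds s₀ ha))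
        self_mem_nhdsWithin] with s hs
      obtain ⟨hball, hIoc⟩ := hs
      have hdist : |s - s₀| < a := by
        have := Metric.mem_ball.mp hball
        rwa [Real.dist_eq] at this
      have h1 : a ≤ s - t := by
        rw [abs_sub_lt_iff] at hdist
        simp only [ha_def] at *
        linarith [hdist.2]
      have h2 : s - t ≤ b := by simp only [hb_def]; linarith [hIoc.2]
      filter_upwards with y
      rw [norm_smul (heatKernel d (s - t) y) (fderiv ℝ (h s) (x - y)), Real.norm_eq_abs,
        abs_of_nonneg (hk_nonneg (ha.trans_le h1) y), mul_comm M]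
      apply mul_le_mul (hk_le ha h1 h2 y) (hb2 s (hsub hIoc) (x - y))
        (norm_nonneg _) (by positivity)
    · have : ∀ y : EuclideanSpace ℝ (Fin d), -‖y‖^2 / (2*b) = -(1/(2*b)) * ‖y‖^2 :=
        fun y => by ring
      simp_rw [this]
      exact (((integrable_gauss (by positivity)).const_mul _).const_mul M)
    · filter_upwards with y
      have t1 : Filter.Tendsto (fun s => heatKernel d (s - t) y)
          (nhdsWithin s₀ (Ioc t T)) (nhds (heatKernel d (s₀ - t) y)) := by
        have hg : ContinuousAt (fun s : ℝ => s - t) s₀ := by fun_prop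
        have hc := ContinuousAt.comp (f := fun s : ℝ => s - t) (x := s₀)
          (hk_contAt_u hu₀ y) hg
        exact hc.tendsto.mono_left nhdsWithin_le_nhds
      have t2 : Filter.Tendsto (fun s => fderiv ℝ (h s) (x - y))
          (nhdsWithin s₀ (Ioc t T)) (nhds (fderiv ℝ (h s₀) (x - y))) :=
        (hcont2 s₀ (hsub hs₀) (x - y)).mono_left (nhdsWithin_mono s₀ hsub)
      exact t1.smul t2
  -- measurability and integrability in s
  have hmK : ∀ x, AEStronglyMeasurable (fun s => ∫ y, heatKernel d (s - t) y * h s (x - y))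
      (volume.restrict (Ioc t T)) :=
    fun x => (hKcont x).aestronglyMeasurable measurableSet_Ioc
  have hmL : ∀ x, AEStronglyMeasurable
      (fun s => ∫ y, heatKernel d (s - t) y • fderiv ℝ (h s) (x - y))
      (volume.restrict (Ioc t T)) :=
    fun x => (hLcont x).aestronglyMeasurable measurableSet_Ioc
  have hfin : volume (Ioc t T) < ⊤ := measure_Ioc_lt_top
  have hiK : ∀ x, IntegrableOn (fun s => ∫ y, heatKernel d (s - t) y * h s (x - y))
      (Ioc t T) := by
    intro x
    apply Integrable.mono' (integrableOn_const (C := M) hfin.ne) (hmK x)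
    filter_upwards [ae_restrict_mem measurableSet_Ioc] with s hs
    simpa using keyK s hs x
  have hiL : ∀ x, IntegrableOn
      (fun s => ∫ y, heatKernel d (s - t) y • fderiv ℝ (h s) (x - y)) (Ioc t T) := by
    intro x
    apply Integrable.mono' (integrableOn_const (C := M) hfin.ne) (hmL x)
    filter_upwards [ae_restrict_mem measurableSet_Ioc] with s hs
    exact keyL s hs x
  -- differentiability of v t
  have hvD : ∀ x₀, HasFDerivAt (v t)
      (∫ s in Ioc t T, ∫ y, heatKernel d (s - t) y • fderiv ℝ (h s) (x₀ - y)) x₀ := by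
    intro x₀
    have hmain : HasFDerivAt
        (fun x => ∫ s in Ioc t T, ∫ y, heatKernel d (s - t) y * h s (x - y))
        (∫ s in Ioc t T, ∫ y, heatKernel d (s - t) y • fderiv ℝ (h s) (x₀ - y)) x₀ := by
      apply hasFDerivAt_integral_of_dominated_of_fderiv_le (Metric.ball_mem_nhds x₀ one_pos)
        (bound := fun _ => M)
        (F' := fun x s => ∫ y, heatKernel d (s - t) y • fderiv ℝ (h s) (x - y))
      · filter_upwards with x; exact hmK x
      · exact hiK x₀
      · exact hmL x₀
      · filter_upwards [ae_restrict_mem measurableSet_Ioc] with s hs x _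
        exact keyL s hs x
      · exact integrableOn_const hfin.ne
      · filter_upwards [ae_restrict_mem measurableSet_Ioc] with s hs x _
        exact keyD s hs x
    have hvt : v t = fun x => ∫ s in Ioc t T, ∫ y, heatKernel d (s - t) y * h s (x - y) :=
      funext hvK
    rw [hvt]
    exact hmain
  have hμ : (volume (Ioc t T)).toReal = T - t := by
    rw [Real.volume_Ioc, ENNReal.toReal_ofReal (by linarith)]
  -- sup bound on v
  have bndv : ∀ x, |v t x| ≤ M * T := by
    intro x
    rw [hvK x]
    have h1 : ‖∫ s in Ioc t T, ∫ y, heatKernel d (s - t) y * h s (x - y)‖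
        ≤ ∫ _s in Ioc t T, M := by
      apply norm_integral_le_of_norm_le (integrableOn_const hfin.ne)
      filter_upwards [ae_restrict_mem measurableSet_Ioc] with s hs
      simpa using keyK s hs x
    rw [setIntegral_const, measureReal_def, hμ, smul_eq_mul] at h1
    rw [← Real.norm_eq_abs]
    refine h1.trans ?_
    nlinarith
  -- gradient bound
  have bndg : ∀ x, ‖fderiv ℝ (v t) x‖ ≤ M * T := by
    intro x
    rw [(hvD x).fderiv]
    have h1 : ‖∫ s in Ioc t T, ∫ y, heatKernel d (s - t) y • fderiv ℝ (h s) (x - y)‖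
        ≤ ∫ _s in Ioc t T, M := by
      apply norm_integral_le_of_norm_le (integrableOn_const hfin.ne)
      filter_upwards [ae_restrict_mem measurableSet_Ioc] with s hs
      exact keyL s hs x
    rw [setIntegral_const, measureReal_def, hμ, smul_eq_mul] at h1
    refine h1.trans ?_
    nlinarith
  -- Hölder bound on gradient
  have bndh : ∀ x z, ‖fderiv ℝ (v t) x - fderiv ℝ (v t) z‖ ≤ (M * T) * ‖x - z‖ ^ α := by
    intro x z
    rw [(hvD x).fderiv, (hvD z).fderiv, ← integral_sub (hiL x) (hiL z)]
    have h1 : ‖∫ s in Ioc t T, ((∫ y, heatKernel d (s - t) y • fderiv ℝ (h s) (x - y))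
        - ∫ y, heatKernel d (s - t) y • fderiv ℝ (h s) (z - y))‖
        ≤ ∫ _s in Ioc t T, M * ‖x - z‖ ^ α := by
      apply norm_integral_le_of_norm_le (integrableOn_const hfin.ne)
      filter_upwards [ae_restrict_mem measurableSet_Ioc] with s hs
      exact keyLd s hs x z
    rw [setIntegral_const, measureReal_def, hμ, smul_eq_mul] at h1
    refine h1.trans ?_
    have hrp : (0:ℝ) ≤ ‖x - z‖ ^ α := Real.rpow_nonneg (norm_nonneg _) _
    nlinarith [mul_nonneg (mul_nonneg hM0 ht0) hrp]
  -- assemble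
  refine ⟨⟨M * T, bndv⟩, fun x => (hvD x).differentiableAt, ⟨M * T, fun x => ?_⟩,
    ⟨M * T, fun x z => ?_⟩, ?_⟩
  · rw [norm_gradient]; exact bndg x
  · rw [norm_gradient_sub]; exact bndh x z
  · have n1 : supNorm (v t) ≤ M * T := supNorm_le (fun x => by simpa using bndv x)
    have n2 : supNorm (gradient (v t)) ≤ M * T :=
      supNorm_le (fun x => by rw [norm_gradient]; exact bndg x)
    have n3 : holderSem α (gradient (v t)) ≤ M * T :=
      holderSem_le hpair (fun x z => by rw [norm_gradient_sub]; exact bndh x z)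
    unfold c1aNorm
    nlinarith
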